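/- Let s₁ᴿ, s₂ᴿ ∈ ℝ and set s₁ = e^{πi/4}·s₁ᴿ and s₂ = i·s₂ᴿ. Define p(λ) = λ⁴ − s₁λ³ − s₂λ² + conj(s₁)λ − 1. If λ ∈ ℂ satisfies p(λ) = 0, then λ ≠ 0 and p(1/(−iλ)) = 0, i.e. the roots of p are invariant under the map λ ↦ 1/(−iλ). -/

import Mathlib

/-- Case 4b: with `s₁ = e^{πi/4} s₁ᴿ`, `s₂ = i s₂ᴿ` (`s₁ᴿ, s₂ᴿ` real), the roots of
`p(λ) = λ⁴ − s₁λ³ − s₂λ² + conj(s₁)λ − 1` are invariant under `λ ↦ 1/(−iλ)`. -/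
theorem root_symmetry_case4b (s₁R s₂R : ℝ) :
    let s₁ : ℂ := Complex.exp (Real.pi * Complex.I / 4) * (s₁R : ℂ)
    let s₂ : ℂ := Complex.I * (s₂R : ℂ)
    let p : ℂ → ℂ := fun lam =>
      lam ^ 4 - s₁ * lam ^ 3 - s₂ * lam ^ 2 + (starRingEnd ℂ) s₁ * lam - 1
    ∀ lam : ℂ, p lam = 0 → lam ≠ 0 ∧ p (1 / (-Complex.I * lam)) = 0 := by
  intro s₁ s₂ p lam hp
  set e := Complex.exp (Real.pi * Complex.I / 4) with he
  have hene : e ≠ 0 := Complex.exp_ne_zero _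
  have he2 : e ^ 2 = Complex.I := by
    rw [he, sq, ← Complex.exp_add]
    have h : (Real.pi : ℂ) * Complex.I / 4 + (Real.pi : ℂ) * Complex.I / 4
        = (↑(Real.pi / 2) : ℂ) * Complex.I := by push_cast; ring
    rw [h, Complex.exp_mul_I]
    simp
  have hee : e * (starRingEnd ℂ) e = 1 := by
    rw [he, ← Complex.exp_conj, ← Complex.exp_add]
    have h : (Real.pi : ℂ) * Complex.I / 4
        + (starRingEnd ℂ) ((Real.pi : ℂ) * Complex.I / 4) = 0 := by
      simp [map_div₀, Complex.conj_ofReal, map_ofNat]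
      ring
    rw [h, Complex.exp_zero]
  have hce : (starRingEnd ℂ) e = -Complex.I * e := by
    have h1 : e * (-Complex.I * e) = 1 := by
      calc e * (-Complex.I * e) = -(Complex.I * e ^ 2) := by ring
      _ = -(Complex.I * Complex.I) := by rw [he2]
      _ = 1 := by simp [Complex.I_mul_I]
    exact mul_left_cancel₀ hene (hee.trans h1.symm)
  have hlam : lam ≠ 0 := by
    intro h
    simp [p, s₁, s₂, h] at hp
  refine ⟨hlam, ?_⟩
  have hp' : lam ^ 4 - e * (s₁R : ℂ) * lam ^ 3 - Complex.I * (s₂R : ℂ) * lam ^ 2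
      + (-Complex.I * e) * (s₁R : ℂ) * lam - 1 = 0 := by
    have := hp
    simp only [p, s₁, s₂, map_mul, Complex.conj_ofReal, hce] at this
    rw [← he, hce] at this
    exact this
  simp only [p, s₁, s₂, map_mul, Complex.conj_ofReal, hce, ← he]
  have hmu : (1 : ℂ) / (-Complex.I * lam) = Complex.I / lam := by
    have hI : -Complex.I * lam ≠ 0 := by
      simp [Complex.I_ne_zero, hlam]
    rw [div_eq_div_iff hI hlam]
    linear_combination lam * Complex.I_sq
  rw [hmu]
  have hnu : (Complex.I / lam) * lam = Complex.I := div_mul_cancel₀ _ hlam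
  have h4 : lam ^ 4 ≠ 0 := pow_ne_zero _ hlam
  have key : lam ^ 4 * ((Complex.I / lam) ^ 4 - e * (s₁R : ℂ) * (Complex.I / lam) ^ 3
      - Complex.I * (s₂R : ℂ) * (Complex.I / lam) ^ 2
      + -Complex.I * e * (s₁R : ℂ) * (Complex.I / lam) - 1) = 0 := by
    linear_combination
      ((Complex.I / lam * lam) ^ 3 + (Complex.I / lam * lam) ^ 2 * Complex.I
        + (Complex.I / lam * lam) * Complex.I ^ 2 + Complex.I ^ 3
        - e * (s₁R : ℂ) * lam * ((Complex.I / lam * lam) ^ 2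
          + (Complex.I / lam * lam) * Complex.I + Complex.I ^ 2)
        - Complex.I * (s₂R : ℂ) * lam ^ 2 * ((Complex.I / lam * lam) + Complex.I)
        - Complex.I * e * (s₁R : ℂ) * lam ^ 3) * hnu
      + (-1 : ℂ) * hp'
      + (Complex.I ^ 2 - 1 - e * (s₁R : ℂ) * Complex.I * lam
        - (s₂R : ℂ) * Complex.I * lam ^ 2 - e * (s₁R : ℂ) * lam ^ 3) * Complex.I_sq
  have h0 := (mul_eq_zero.mp key).resolve_left h4
  linear_combination h0
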